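/- Let G be an invertible symmetric real n×n matrix and N a real n×q matrix such that NᵀG⁻¹N is negative definite, and let H = G⁻¹ − G⁻¹N(NᵀG⁻¹N)⁻¹NᵀG⁻¹. If a vector n ∈ ℝⁿ satisfies nᵀH n < 0, then the augmented matrix N₊ = [N n] satisfies that N₊ᵀG⁻¹N₊ is negative definite. -/

import Mathlib

open Matrix

/-- Schur complement criterion, PosDef version. -/
lemma posDef_fromBlocks₁₁ {m p : Type*} [Fintype m] [DecidableEq m] [Fintype p]
    {A : Matrix m m ℝ} (B : Matrix m p ℝ) {D : Matrix p p ℝ}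
    (hA : A.PosDef) [Invertible A] (h : (D - Bᴴ * A⁻¹ * B).PosDef) :
    (Matrix.fromBlocks A B Bᴴ D).PosDef := by
  refine Matrix.PosDef.of_dotProduct_mulVec_pos ((Matrix.IsHermitian.fromBlocks₁₁ _ _ hA.1).mpr h.1) fun x hx => ?_
  rw [← Sum.elim_comp_inl_inr x, dotProduct_mulVec,
    Matrix.schur_complement_eq₁₁ B D _ _ hA.1]
  by_cases hx2 : x ∘ Sum.inr = 0
  · have hx1 : x ∘ Sum.inl ≠ 0 := by
      intro h1
      apply hx
      funext i
      cases i with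
      | inl i => exact congrFun h1 i
      | inr i => exact congrFun hx2 i
    rw [hx2]
    simp only [mulVec_zero, add_zero, star_zero, zero_vecMul, zero_dotProduct, add_zero]
    rw [← dotProduct_mulVec]
    exact hA.dotProduct_mulVec_pos hx1
  · have h1 : 0 ≤ star (x ∘ Sum.inl + (A⁻¹ * B) *ᵥ (x ∘ Sum.inr)) ᵥ* A ⬝ᵥ
        (x ∘ Sum.inl + (A⁻¹ * B) *ᵥ (x ∘ Sum.inr)) := by
      rw [← dotProduct_mulVec]
      exact hA.posSemidef.dotProduct_mulVec_nonneg _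
    have h2 : 0 < star (x ∘ Sum.inr) ᵥ* (D - Bᴴ * A⁻¹ * B) ⬝ᵥ (x ∘ Sum.inr) := by
      rw [← dotProduct_mulVec]
      exact h.dotProduct_mulVec_pos hx2
    linarith

lemma posDef_unit {M : Matrix Unit Unit ℝ} (h : 0 < M () ()) : M.PosDef := by
  refine Matrix.PosDef.of_dotProduct_mulVec_pos ?_ ?_
  · ext i j
    simp [Matrix.conjTranspose]
  · intro x hx
    have hx0 : x () ≠ 0 := by
      intro h0
      exact hx (funext fun i => h0)
    have : star x ⬝ᵥ M *ᵥ x = x () * (M () () * x ()) := by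
      simp [dotProduct, Matrix.mulVec]
    rw [this]
    have := mul_pos h (mul_self_pos.mpr hx0)
    nlinarith

/-- If `NᵀG⁻¹N` is negative definite and `nᵀH n < 0`, then the augmented matrix
`N₊ = [N n]` also has `N₊ᵀG⁻¹N₊` negative definite. -/
theorem stmt_9 {n q : ℕ} (G : Matrix (Fin n) (Fin n) ℝ)
    (hGsym : G.IsSymm) (hG : IsUnit G.det)
    (N : Matrix (Fin n) (Fin q) ℝ)
    (hnd : (-(Nᵀ * G⁻¹ * N)).PosDef)
    (H : Matrix (Fin n) (Fin n) ℝ)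
    (hH : H = G⁻¹ - G⁻¹ * N * (Nᵀ * G⁻¹ * N)⁻¹ * Nᵀ * G⁻¹)
    (v : Fin n → ℝ) (hv : v ⬝ᵥ H *ᵥ v < 0)
    (Nplus : Matrix (Fin n) (Fin q ⊕ Unit) ℝ)
    (hNplus : Nplus = Matrix.fromCols N (Matrix.replicateCol Unit v)) :
    (-(Nplusᵀ * G⁻¹ * Nplus)).PosDef := by
  set A := Nᵀ * G⁻¹ * N with hA
  have hGinv_symm : (G⁻¹)ᵀ = G⁻¹ := by
    rw [Matrix.transpose_nonsing_inv, hGsym.eq]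
  -- invertibility of -A
  haveI : Invertible (-A) := Matrix.invertibleOfIsUnitDet _ hnd.det_pos.ne'.isUnit
  have hAunit : IsUnit A.det := by
    have := hnd.det_pos.ne'.isUnit
    rw [show -A = (-1 : ℝ) • A by simp, Matrix.det_smul] at this
    exact (isUnit_iff_ne_zero.mpr fun h0 => by simp [h0] at this)
  have hnegAinv : (-A)⁻¹ = -(A⁻¹) := by
    apply Matrix.inv_eq_right_inv
    rw [Matrix.neg_mul, Matrix.mul_neg, neg_neg, Matrix.mul_nonsing_inv _ hAunit]
  -- block decomposition
  have hblock : -(Nplusᵀ * G⁻¹ * Nplus) =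
      Matrix.fromBlocks (-A) (-(Nᵀ * G⁻¹ * Matrix.replicateCol Unit v))
        (-(Nᵀ * G⁻¹ * Matrix.replicateCol Unit v))ᴴ
        (-((Matrix.replicateCol Unit v)ᵀ * G⁻¹ * Matrix.replicateCol Unit v)) := by
    rw [hNplus, Matrix.transpose_fromCols, Matrix.fromRows_mul, Matrix.fromRows_mul_fromCols]
    have hBH : (-(Nᵀ * G⁻¹ * Matrix.replicateCol Unit v))ᴴ = -((Matrix.replicateCol Unit v)ᵀ * G⁻¹ * N) := by
      rw [Matrix.conjTranspose_eq_transpose_of_trivial]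
      rw [Matrix.transpose_neg, Matrix.transpose_mul, Matrix.transpose_mul, hGinv_symm,
        Matrix.transpose_transpose, Matrix.mul_assoc]
    rw [hBH, hA]
    ext (i | i) (j | j) <;> simp [Matrix.fromBlocks]
  rw [hblock]
  apply posDef_fromBlocks₁₁ _ hnd
  -- Schur complement is positive
  have hschur : -((Matrix.replicateCol Unit v)ᵀ * G⁻¹ * Matrix.replicateCol Unit v) -
      (-(Nᵀ * G⁻¹ * Matrix.replicateCol Unit v))ᴴ * (-A)⁻¹ * (-(Nᵀ * G⁻¹ * Matrix.replicateCol Unit v)) =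
      -((Matrix.replicateCol Unit v)ᵀ * H * Matrix.replicateCol Unit v) := by
    rw [hnegAinv, hH, Matrix.conjTranspose_eq_transpose_of_trivial,
      Matrix.transpose_neg, Matrix.transpose_mul, Matrix.transpose_mul, hGinv_symm,
      Matrix.transpose_transpose]
    simp only [Matrix.neg_mul, Matrix.mul_neg, neg_neg, Matrix.sub_mul, Matrix.mul_sub,
      Matrix.mul_assoc, sub_neg_eq_add, neg_add_rev]
    abel
  rw [hschur]
  apply posDef_unit
  have hentry : ((Matrix.replicateCol Unit v)ᵀ * H * Matrix.replicateCol Unit v) () () = v ⬝ᵥ H *ᵥ v := by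
    simp only [Matrix.mul_apply, Matrix.transpose_apply, Matrix.replicateCol_apply, dotProduct,
      Matrix.mulVec, Finset.sum_mul, Finset.mul_sum]
    rw [Finset.sum_comm]
    exact Finset.sum_congr rfl fun i _ => Finset.sum_congr rfl fun j _ => by ring
  simp only [Matrix.neg_apply, hentry]
  linarith
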